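/- Let σ be a nonincreasing zero sequence with 1 = σ(1) > σ(2) > 0, let v = #{n ≥ 2 : σ(n) = σ(2)}, and let τ be the nonincreasing rearrangement of the d-th tensor power of σ. Then for any n ∈ {2, ..., (1+v)^d}: τ(n) ≥ σ(2) · (1/n)^{β(d,n)} where β(d,n) = log(σ(2)^{-1}) / log( 1 + v·d / log_{1+v} n ). -/

import Mathlib

open Filter Real Set

private lemma aux_desc (k d : ℕ) (hkd : k ≤ d) (i : ℕ) :
    k.descFactorial i * d ^ i ≤ d.descFactorial i * k ^ i := by
  induction i with
  | zero => simp
  | succ i ih =>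
    rcases le_or_gt k i with h | h
    · simp [Nat.descFactorial_succ, Nat.sub_eq_zero_of_le h]
    · have h1 : (k - i) * d ≤ (d - i) * k := by
        rw [Nat.sub_mul, Nat.sub_mul]
        have h2 : i * k ≤ i * d := Nat.mul_le_mul_left i hkd
        have h3 : k * d = d * k := Nat.mul_comm k d
        omega
      calc k.descFactorial (i+1) * d ^ (i+1)
          = ((k - i) * d) * (k.descFactorial i * d ^ i) := by
            rw [Nat.descFactorial_succ]; ring
        _ ≤ ((d - i) * k) * (d.descFactorial i * k ^ i) := Nat.mul_le_mul h1 ih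
        _ = d.descFactorial (i+1) * k ^ (i+1) := by
            rw [Nat.descFactorial_succ]; ring

private lemma aux_choose (k d : ℕ) (hkd : k ≤ d) (i : ℕ) :
    k.choose i * d ^ i ≤ d.choose i * k ^ i := by
  obtain ⟨a, ha⟩ := Nat.factorial_dvd_descFactorial k i
  obtain ⟨b, hb⟩ := Nat.factorial_dvd_descFactorial d i
  have hfa : 0 < i.factorial := Nat.factorial_pos i
  have h1 : k.choose i = a := by
    rw [Nat.choose_eq_descFactorial_div_factorial, ha, Nat.mul_div_cancel_left _ hfa]
  have h2 : d.choose i = b := by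
    rw [Nat.choose_eq_descFactorial_div_factorial, hb, Nat.mul_div_cancel_left _ hfa]
  have hdes := aux_desc k d hkd i
  rw [ha, hb] at hdes
  rw [h1, h2]
  have h3 : i.factorial * (a * d ^ i) ≤ i.factorial * (b * k ^ i) := by
    calc i.factorial * (a * d ^ i) = i.factorial * a * d ^ i := by ring
      _ ≤ i.factorial * b * k ^ i := hdes
      _ = i.factorial * (b * k ^ i) := by ring
  exact Nat.le_of_mul_le_mul_left h3 hfa

set_option maxHeartbeats 1600000 in
theorem stmt_10 (d : ℕ) (hd : 1 ≤ d) (σ τ : ℕ+ → ℝ)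
    (hσa : Antitone σ) (hσ0 : Filter.Tendsto σ Filter.atTop (nhds 0))
    (hσ1 : σ 1 = 1) (hσ2pos : 0 < σ 2) (hσ2lt : σ 2 < 1)
    (hτa : Antitone τ)
    -- τ is the nonincreasing rearrangement of the d-th tensor power of σ
    (hre : ∀ t : ℝ, 0 < t →
      {n : ℕ+ | t ≤ τ n}.ncard = {x : Fin d → ℕ+ | t ≤ ∏ j, σ (x j)}.ncard)
    (v : ℕ) (hv : v = {m : ℕ+ | 2 ≤ m ∧ σ m = σ 2}.ncard) (hvpos : 0 < v)
    (n : ℕ+) (hn2 : 2 ≤ n) (hn : (n : ℕ) ≤ (1 + v) ^ d) :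
    σ 2 * (1 / ((n : ℕ) : ℝ)) ^
        (Real.log (σ 2)⁻¹ /
          Real.log (1 + ((v : ℝ) * d) / Real.logb (1 + (v : ℝ)) ((n : ℕ) : ℝ)))
      ≤ τ n := by
  -- basic facts about σ
  have hσ0' : ∀ m : ℕ+, 0 ≤ σ m := fun m =>
    le_of_tendsto hσ0 (Filter.eventually_atTop.mpr ⟨m, fun b hb => hσa hb⟩)
  have hσle1 : ∀ m : ℕ+, σ m ≤ 1 := fun m => hσ1 ▸ hσa m.one_le
  -- the plateau of σ at level σ 2
  have hplat : ∀ m : ℕ+, 2 ≤ m → (m : ℕ) ≤ v + 1 → σ m = σ 2 := by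
    intro m hm2 hmv
    by_contra hne
    have hEsub : {m' : ℕ+ | 2 ≤ m' ∧ σ m' = σ 2} ⊆ Set.Ico 2 m := by
      rintro e ⟨he2, heσ⟩
      refine ⟨he2, ?_⟩
      by_contra hlt
      push_neg at hlt
      exact hne (le_antisymm (hσa hm2) (heσ ▸ hσa hlt))
    have hIco : (Set.Ico (2:ℕ+) m).ncard = (m:ℕ) - 2 := by
      rw [← Finset.coe_Ico, Set.ncard_coe_finset, PNat.card_Ico]
      rfl
    have hle := Set.ncard_le_ncard hEsub (Set.finite_Ico _ _)
    rw [← hv, hIco] at hle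
    have hm2' : (2:ℕ) ≤ (m:ℕ) := hm2
    omega
  -- real number setup
  have hv1 : (1:ℝ) ≤ (v:ℝ) := by exact_mod_cast hvpos
  have hd1 : (1:ℝ) ≤ (d:ℝ) := by exact_mod_cast hd
  have hn2N : (2:ℕ) ≤ (n:ℕ) := hn2
  have hn2R : (2:ℝ) ≤ ((n:ℕ):ℝ) := by exact_mod_cast hn2N
  set N : ℝ := ((n:ℕ):ℝ) with hNdef
  have hN1 : (1:ℝ) < N := by linarith
  have hb1 : (1:ℝ) < 1 + (v:ℝ) := by linarith
  set L : ℝ := Real.logb (1 + (v:ℝ)) N with hLdef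
  have hLpos : 0 < L := Real.logb_pos hb1 hN1
  have hLd : L ≤ (d:ℝ) := by
    rw [hLdef, Real.logb_le_iff_le_rpow hb1 (by linarith)]
    rw [Real.rpow_natCast]
    calc N ≤ (((1+v)^d : ℕ) : ℝ) := by rw [hNdef]; exact_mod_cast hn
      _ = (1 + (v:ℝ))^d := by push_cast; ring
  set A : ℝ := 1 + (v:ℝ) * d / L with hAdef
  have hvd : 0 < (v:ℝ) * d := by nlinarith
  have hAv : 1 + (v:ℝ) ≤ A := by
    have h1 : (v:ℝ) ≤ v * d / L := by
      rw [le_div_iff₀ hLpos]; nlinarith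
    rw [hAdef]; linarith
  have hA1 : (1:ℝ) < A := by linarith
  have hlogA : 0 < Real.log A := Real.log_pos hA1
  have hlogN : 0 < Real.log N := Real.log_pos hN1
  set x : ℝ := Real.log N / Real.log A with hxdef
  have hxpos : 0 < x := div_pos hlogN hlogA
  have hxL : x ≤ L := by
    have hlogb : Real.log (1 + (v:ℝ)) ≤ Real.log A := Real.log_le_log (by linarith) hAv
    have : L = Real.log N / Real.log (1 + (v:ℝ)) := by rw [hLdef, Real.logb]
    rw [this, hxdef]
    exact div_le_div_of_nonneg_left hlogN.le (Real.log_pos hb1) hlogb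
  set k : ℕ := ⌈x⌉₊ with hkdef
  have hk1 : 1 ≤ k := Nat.one_le_iff_ne_zero.mpr (by
    simp only [hkdef, ne_eq, Nat.ceil_eq_zero, not_le]; exact hxpos)
  have hkx : x ≤ (k:ℝ) := Nat.le_ceil x
  have hkd : k ≤ d := by
    rw [hkdef]; exact Nat.ceil_le.mpr (hxL.trans hLd)
  have hkx1 : (k:ℝ) - 1 ≤ x := by
    have := Nat.ceil_lt_add_one hxpos.le
    rw [hkdef]; linarith
  have hkposR : (0:ℝ) < k := by exact_mod_cast hk1
  -- the threshold t
  set t : ℝ := σ 2 ^ k with htdef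
  have htpos : 0 < t := pow_pos hσ2pos k
  -- the combinatorial family
  classical
  set P0 : Finset (Finset (Fin d)) :=
    Finset.univ.powerset.filter (fun s => s.card ≤ k) with hP0def
  set P : Finset (Σ s : Finset (Fin d), ∀ a ∈ s, ℕ) :=
    P0.sigma (fun s => s.pi (fun _ => Finset.range v)) with hPdef
  set φ : (Σ s : Finset (Fin d), ∀ a ∈ s, ℕ) → (Fin d → ℕ+) :=
    fun p j => if h : j ∈ p.1 then ⟨p.2 j h + 2, by omega⟩ else 1 with hφdef
  set X : Set (Fin d → ℕ+) := {x : Fin d → ℕ+ | t ≤ ∏ j, σ (x j)} with hXdef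
  -- X is finite
  have hXfin : X.Finite := by
    have hev : ∀ᶠ m in Filter.atTop, σ m < t := hσ0.eventually_lt_const htpos
    obtain ⟨M, hM⟩ := Filter.eventually_atTop.mp hev
    apply Set.Finite.subset (Set.Finite.pi (fun _ : Fin d => Set.finite_Ico 1 M))
    intro y hy
    intro j _
    refine ⟨y j |>.one_le, ?_⟩
    by_contra hMy
    push_neg at hMy
    have h1 : t ≤ σ (y j) := by
      have h2 : ∏ i, σ (y i) = σ (y j) * ∏ i ∈ Finset.univ.erase j, σ (y i) :=
        (Finset.mul_prod_erase Finset.univ _ (Finset.mem_univ j)).symm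
      have h3 : ∏ i ∈ Finset.univ.erase j, σ (y i) ≤ 1 :=
        Finset.prod_le_one (fun i _ => hσ0' _) (fun i _ => hσle1 _)
      have h4 : t ≤ ∏ i, σ (y i) := hy
      nlinarith [hσ0' (y j)]
    exact absurd h1 (not_le.mpr (hM (y j) hMy))
  -- the image of P under φ lies in X
  have himg : ∀ p ∈ P, φ p ∈ X := by
    intro p hp
    rw [hPdef, Finset.mem_sigma] at hp
    obtain ⟨hp1, hp2⟩ := hp
    rw [hP0def, Finset.mem_filter] at hp1
    have hcard : p.1.card ≤ k := hp1.2
    have hprod : ∏ j, σ (φ p j) = σ 2 ^ p.1.card := by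
      rw [← Finset.prod_mul_prod_compl p.1 (fun j => σ (φ p j))]
      have h1 : ∏ j ∈ p.1, σ (φ p j) = σ 2 ^ p.1.card := by
        rw [← Finset.prod_const]
        apply Finset.prod_congr rfl
        intro j hj
        have hval := Finset.mem_pi.mp hp2 j hj
        rw [Finset.mem_range] at hval
        have : φ p j = ⟨p.2 j hj + 2, by omega⟩ := by rw [hφdef]; simp [hj]; rfl
        rw [this]
        apply hplat
        · exact_mod_cast (by omega : 2 ≤ p.2 j hj + 2)
        · show p.2 j hj + 2 ≤ v + 1; omega
      have h2 : ∏ j ∈ p.1ᶜ, σ (φ p j) = 1 := by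
        apply Finset.prod_eq_one
        intro j hj
        rw [Finset.mem_compl] at hj
        have : φ p j = 1 := by rw [hφdef]; simp [hj]
        rw [this, hσ1]
      rw [h1, h2, mul_one]
    show t ≤ ∏ j, σ (φ p j)
    rw [hprod, htdef]
    exact pow_le_pow_of_le_one hσ2pos.le hσ2lt.le hcard
  -- φ is injective on P
  have hinj : Set.InjOn φ ↑P := by
    intro p _ q _ hpq
    have hs : p.1 = q.1 := by
      ext j
      constructor
      · intro hj
        by_contra hjq
        have h1 : (φ p j : ℕ) = φ q j := congrArg PNat.val (congrFun hpq j)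
        have e1 : (φ p j : ℕ) = p.2 j hj + 2 := by rw [hφdef]; simp [hj]
        have e2 : (φ q j : ℕ) = 1 := by rw [hφdef]; simp [hjq]
        omega
      · intro hj
        by_contra hjp
        have h1 : (φ p j : ℕ) = φ q j := congrArg PNat.val (congrFun hpq j)
        have e1 : (φ q j : ℕ) = q.2 j hj + 2 := by rw [hφdef]; simp [hj]
        have e2 : (φ p j : ℕ) = 1 := by rw [hφdef]; simp [hjp]
        omega
    obtain ⟨s, f⟩ := p
    obtain ⟨s', f'⟩ := q
    simp only at hs
    subst hs
    have hf : f = f' := by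
      funext a ha
      have h1 : (φ ⟨s, f⟩ a : ℕ) = φ ⟨s, f'⟩ a := congrArg PNat.val (congrFun hpq a)
      have e1 : (φ ⟨s, f⟩ a : ℕ) = f a ha + 2 := by rw [hφdef]; simp [ha]
      have e2 : (φ ⟨s, f'⟩ a : ℕ) = f' a ha + 2 := by rw [hφdef]; simp [ha]
      omega
    rw [hf]
  -- count: n ≤ P.card
  have hcardP : P.card = ∑ s ∈ P0, v ^ s.card := by
    rw [hPdef, Finset.card_sigma]
    apply Finset.sum_congr rfl
    intro s _
    rw [Finset.card_pi]
    simp [Finset.prod_const]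
  have hcardP2 : P.card = ∑ i ∈ Finset.range (k+1), d.choose i * v ^ i := by
    rw [hcardP]
    rw [← Finset.sum_fiberwise_of_maps_to (g := Finset.card) (t := Finset.range (k+1))
      (fun s hs => by
        rw [hP0def, Finset.mem_filter] at hs
        rw [Finset.mem_range]; omega)]
    apply Finset.sum_congr rfl
    intro i hi
    rw [Finset.mem_range] at hi
    have hfib : P0.filter (fun s => s.card = i) = Finset.univ.powersetCard i := by
      ext s
      rw [Finset.mem_filter, hP0def, Finset.mem_filter, Finset.mem_powerset,
        Finset.mem_powersetCard]
      constructor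
      · rintro ⟨⟨h1, _⟩, h3⟩; exact ⟨h1, h3⟩
      · rintro ⟨h1, h2⟩; exact ⟨⟨h1, by omega⟩, h2⟩
    rw [hfib]
    calc ∑ s ∈ Finset.powersetCard i Finset.univ, v ^ s.card
        = ∑ _s ∈ Finset.powersetCard i Finset.univ, v ^ i :=
          Finset.sum_congr rfl (fun s hs => by
            rw [(Finset.mem_powersetCard.mp hs).2])
      _ = d.choose i * v ^ i := by
          rw [Finset.sum_const, Finset.card_powersetCard, Finset.card_univ, Fintype.card_fin,
            smul_eq_mul]
  -- the real-analytic lower bound: N ≤ (1 + v d / k)^k ≤ P.card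
  have hNk : N ≤ (1 + (v:ℝ) * d / k) ^ k := by
    rcases le_total (k:ℝ) L with hkL | hLk
    · have h1 : A ≤ 1 + (v:ℝ) * d / k := by
        have := div_le_div_of_nonneg_left hvd.le hkposR hkL
        rw [hAdef]; linarith
      have h2 : N ≤ A ^ k := by
        have e1 : N = Real.exp (x * Real.log A) := by
          rw [hxdef, div_mul_cancel₀ _ hlogA.ne', Real.exp_log (by linarith)]
        have e2 : A ^ k = Real.exp ((k:ℝ) * Real.log A) := by
          rw [← Real.log_pow, Real.exp_log (pow_pos (by linarith) k)]
        rw [e1, e2]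
        exact Real.exp_le_exp.mpr (mul_le_mul_of_nonneg_right hkx hlogA.le)
      calc N ≤ A ^ k := h2
        _ ≤ (1 + (v:ℝ) * d / k) ^ k := pow_le_pow_left₀ (by linarith) h1 k
    · have hr1 : (0:ℝ) ≤ L / k := by positivity
      have hr2 : L / k ≤ 1 := by rw [div_le_one hkposR]; exact hLk
      have hbern : (1 + (v:ℝ)) ^ (L / k) ≤ 1 + (L / k) * v :=
        rpow_one_add_le_one_add_mul_self (by linarith) hr1 hr2
      have h3 : 1 + (L / k) * (v:ℝ) ≤ 1 + (v:ℝ) * d / k := by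
        have h4 : L / k * (v:ℝ) ≤ (d:ℝ) / k * v := by
          apply mul_le_mul_of_nonneg_right _ (by linarith)
          gcongr
        have h5 : (d:ℝ) / k * v = v * d / k := by ring
        linarith [h4, h5 ▸ h4]
      have hNL : N = ((1 + (v:ℝ)) ^ (L / k)) ^ (k:ℕ) := by
        have h7 : ((1 + (v:ℝ)) ^ (L / k)) ^ (k:ℕ) = (1 + (v:ℝ)) ^ (L / (k:ℝ) * k) := by
          rw [← Real.rpow_natCast ((1 + (v:ℝ)) ^ (L / k)) k,
            ← Real.rpow_mul (by linarith : (0:ℝ) ≤ 1 + (v:ℝ))]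
        have h8 : L / (k:ℝ) * k = L := div_mul_cancel₀ L hkposR.ne'
        rw [h7, h8, hLdef]
        exact (Real.rpow_logb (by linarith) (ne_of_gt hb1) (by linarith)).symm
      rw [hNL]
      exact pow_le_pow_left₀ (Real.rpow_nonneg (by linarith) _) (hbern.trans h3) k
  have hbinom : ((1:ℝ) + (v:ℝ) * d / k) ^ k
      = ∑ i ∈ Finset.range (k+1), (k.choose i : ℝ) * ((v:ℝ) * d / k) ^ i := by
    have hab := add_pow ((v:ℝ) * d / k) 1 k
    simp only [one_pow, mul_one] at hab
    rw [add_comm ((v:ℝ) * d / k) 1] at hab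
    rw [hab]
    exact Finset.sum_congr rfl (fun i _ => mul_comm _ _)
  have hterm : ∀ i ∈ Finset.range (k+1),
      (k.choose i : ℝ) * ((v:ℝ) * d / k) ^ i ≤ (d.choose i : ℝ) * (v:ℝ) ^ i := by
    intro i _
    have hnat := aux_choose k d hkd i
    have hr : (k.choose i : ℝ) * (d:ℝ) ^ i ≤ (d.choose i : ℝ) * (k:ℝ) ^ i := by
      exact_mod_cast hnat
    have hkpow : (0:ℝ) < (k:ℝ) ^ i := pow_pos hkposR i
    rw [div_pow, mul_pow, ← mul_div_assoc, div_le_iff₀ hkpow]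
    have hvpow : (0:ℝ) ≤ (v:ℝ) ^ i := by positivity
    calc (k.choose i : ℝ) * ((v:ℝ)^i * (d:ℝ)^i)
        = (v:ℝ)^i * ((k.choose i : ℝ) * (d:ℝ)^i) := by ring
      _ ≤ (v:ℝ)^i * ((d.choose i : ℝ) * (k:ℝ)^i) := by
          exact mul_le_mul_of_nonneg_left hr hvpow
      _ = (d.choose i : ℝ) * (v:ℝ)^i * (k:ℝ)^i := by ring
  have hnP : (n:ℕ) ≤ P.card := by
    have hchain : N ≤ (P.card : ℝ) := by
      calc N ≤ (1 + (v:ℝ) * d / k) ^ k := hNk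
        _ = ∑ i ∈ Finset.range (k+1), (k.choose i : ℝ) * ((v:ℝ) * d / k) ^ i := hbinom
        _ ≤ ∑ i ∈ Finset.range (k+1), (d.choose i : ℝ) * (v:ℝ) ^ i :=
            Finset.sum_le_sum hterm
        _ = (P.card : ℝ) := by rw [hcardP2]; push_cast; ring
    rw [hNdef] at hchain
    exact_mod_cast hchain
  -- transfer the count to X, then to the rearrangement
  have hcount : (n:ℕ) ≤ X.ncard := by
    calc (n:ℕ) ≤ P.card := hnP
      _ = (P.image φ).card := (Finset.card_image_of_injOn hinj).symm
      _ = (↑(P.image φ) : Set (Fin d → ℕ+)).ncard := (Set.ncard_coe_finset _).symm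
      _ ≤ X.ncard := Set.ncard_le_ncard (by
          intro y hy
          rw [Finset.coe_image] at hy
          obtain ⟨p, hp, rfl⟩ := hy
          exact himg p hp) hXfin
  have hDn : (n:ℕ) ≤ {m : ℕ+ | t ≤ τ m}.ncard := by
    rw [hre t htpos]; exact hcount
  -- conclude t ≤ τ n
  have hτn : t ≤ τ n := by
    by_contra hcon
    push_neg at hcon
    have hsub : {m : ℕ+ | t ≤ τ m} ⊆ Set.Ico 1 n := by
      intro m hm
      refine ⟨m.one_le, ?_⟩
      by_contra h
      push_neg at h
      exact absurd (le_trans hm (hτa h)) (not_le.mpr hcon)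
    have hIco : (Set.Ico (1:ℕ+) n).ncard = (n:ℕ) - 1 := by
      rw [← Finset.coe_Ico, Set.ncard_coe_finset, PNat.card_Ico]
      rfl
    have hle := Set.ncard_le_ncard hsub (Set.finite_Ico _ _)
    rw [hIco] at hle
    omega
  -- final algebra: σ 2 * (1/N)^β ≤ σ 2 ^ k = t
  refine le_trans ?_ hτn
  set β : ℝ := Real.log (σ 2)⁻¹ / Real.log A with hβdef
  have hlogs : 0 < Real.log (σ 2)⁻¹ := Real.log_pos ((one_lt_inv₀ hσ2pos).mpr hσ2lt)
  have hmain : (1 / N) ^ β ≤ σ 2 ^ (k - 1) := by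
    have e1 : (1 / N) ^ β = Real.exp (-(β * Real.log N)) := by
      rw [one_div, Real.inv_rpow (by linarith : (0:ℝ) ≤ N) β,
        Real.rpow_def_of_pos (by linarith : (0:ℝ) < N), ← Real.exp_neg]
      congr 1
      ring
    have e2 : σ 2 ^ (k - 1) = Real.exp (((k - 1 : ℕ):ℝ) * Real.log (σ 2)) := by
      rw [← Real.log_pow, Real.exp_log (pow_pos hσ2pos _)]
    rw [e1, e2]
    apply Real.exp_le_exp.mpr
    have hc1 : ((k - 1 : ℕ):ℝ) = (k:ℝ) - 1 := by
      push_cast [Nat.cast_sub hk1]; ring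
    have hlog2 : Real.log (σ 2) = -Real.log (σ 2)⁻¹ := by
      rw [Real.log_inv]; ring
    rw [hc1, hlog2]
    have hβx : β * Real.log N = Real.log (σ 2)⁻¹ * x := by
      rw [hβdef, hxdef]; field_simp
    rw [hβx]
    have : ((k:ℝ) - 1) * Real.log (σ 2)⁻¹ ≤ Real.log (σ 2)⁻¹ * x := by
      rw [mul_comm]
      exact mul_le_mul_of_nonneg_left hkx1 hlogs.le
    linarith
  have hfin : σ 2 * (1 / N) ^ β ≤ σ 2 ^ k := by
    have h1 : σ 2 * (1 / N) ^ β ≤ σ 2 * σ 2 ^ (k - 1) :=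
      mul_le_mul_of_nonneg_left hmain hσ2pos.le
    have h2 : σ 2 * σ 2 ^ (k - 1) = σ 2 ^ k := by
      rw [← pow_succ']
      congr 1
      omega
    linarith
  exact hfin
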